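/- Let (H, N) be a graded Lefschetz structure with Weil element w := e^{-ρ(X)} e^{ρ(Y)} e^{-ρ(X)}. A graded bilinear form k on H satisfying k(Nx,y) + k(x,Ny) = 0 is a polarization (i.e. k(·, N^ℓ ·) restricted to the primitive part P_ℓ H = ker(N^{ℓ+1} : H_ℓ → H_{-ℓ-2}) is symmetric positive definite for all ℓ ≥ 0) if and only if the bilinear form h(x,y) := k(x, w y) is symmetric positive definite on H. -/

import Mathlib

variable {V : Type*} [AddCommGroup V] [Module ℝ V]

/-- The exponential of a (nilpotent) endomorphism of a finite-dimensional vector space,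
as the finite sum `∑_{k ≤ dim V} f^k / k!`. -/
noncomputable def expNil (f : Module.End ℝ V) : Module.End ℝ V :=
  ∑ k ∈ Finset.range (Module.finrank ℝ V + 1), ((k.factorial : ℝ)⁻¹) • f ^ k

namespace PolarAux
open Module LinearMap Finset

variable [FiniteDimensional ℝ V]

lemma pow_finrank_eq_zero {f : Module.End ℝ V} (h : IsNilpotent f) :
    f ^ (finrank ℝ V) = 0 := by
  have hc := h.charpoly_eq_X_pow_finrank
  have := LinearMap.aeval_self_charpoly f
  rw [hc] at this
  simpa using this

lemma pow_eq_zero_of_le {f : Module.End ℝ V} {n m : ℕ} (h : f ^ n = 0) (hnm : n ≤ m) :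
    f ^ m = 0 := by
  obtain ⟨r, rfl⟩ := Nat.exists_eq_add_of_le hnm
  rw [pow_add, h, zero_mul]

lemma expNil_apply (f : Module.End ℝ V) (v : V) :
    expNil f v = ∑ k ∈ Finset.range (finrank ℝ V + 1), ((k.factorial : ℝ)⁻¹) • (f ^ k) v := by
  simp [expNil, LinearMap.sum_apply]

lemma expNil_eq (f : Module.End ℝ V) (hf : f ^ (finrank ℝ V) = 0) {n : ℕ}
    (hn : finrank ℝ V + 1 ≤ n) :
    expNil f = ∑ k ∈ Finset.range n, ((k.factorial : ℝ)⁻¹) • f ^ k := by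
  rw [expNil]
  apply Finset.sum_subset (Finset.range_subset_range.2 hn)
  intro k _ hk
  rw [Finset.mem_range, not_lt] at hk
  rw [pow_eq_zero_of_le hf (le_trans (Nat.le_succ _) hk), smul_zero]

noncomputable def strC (ℓ k m : ℕ) : ℝ :=
  ((k.factorial : ℝ) / ((k-m).factorial)) * (((ℓ-k+m).factorial : ℝ) / ((ℓ-k).factorial))

lemma expNil_mul_self (f : Module.End ℝ V) : expNil f * f = f * expNil f := by
  simp only [expNil, Finset.sum_mul, Finset.mul_sum, smul_mul_assoc, mul_smul_comm,
    ← pow_succ, ← pow_succ']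

lemma pow_mul_sl2 (A B D E : Module.End ℝ V) (hD : A * B = B * A + D)
    (hE : A * D = D * A + E) (hAE : A * E = E * A) (k : ℕ) :
    A ^ (k+2) * B = B * A ^ (k+2) + (((k:ℝ)+2)) • (D * A ^ (k+1))
      + ((((k:ℝ)+2) * ((k:ℝ)+1))/2) • (E * A ^ k) := by
  induction k with
  | zero =>
    have : A ^ 2 * B = A * (A * B) := by rw [pow_two, mul_assoc]
    rw [this, hD, mul_add, ← mul_assoc, hD, hE]
    simp only [zero_add, pow_one, pow_zero, mul_one, add_mul, mul_assoc, ← pow_two]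
    push_cast
    match_scalars <;> ring
  | succ k ih =>
    have h1 : A ^ (k+3) * B = A * (A ^ (k+2) * B) := by
      rw [← mul_assoc, ← pow_succ']
    rw [h1, ih]
    simp only [mul_add, mul_smul_comm, ← mul_assoc]
    rw [hD, hE, hAE]
    simp only [add_mul, mul_assoc, ← pow_succ']
    have e3 : k + 1 + 2 = k + 2 + 1 := by omega
    have e2 : k + 1 + 1 = k + 1 + 1 := rfl
    rw [e3]
    push_cast
    match_scalars <;> ring

lemma fact_inv_s1 (i : ℕ) : (((i+2).factorial:ℝ))⁻¹ * ((i:ℝ)+2) = (((i+1).factorial:ℝ))⁻¹ := by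
  have h : (i+2).factorial = (i+2) * (i+1).factorial := Nat.factorial_succ (i+1)
  have h2 : ((i+1).factorial : ℝ) ≠ 0 := by positivity
  rw [h]; push_cast; field_simp

lemma fact_inv_s2 (i : ℕ) :
    (((i+2).factorial:ℝ))⁻¹ * (((i:ℝ)+2) * ((i:ℝ)+1) / 2) = 2⁻¹ * ((i.factorial:ℝ))⁻¹ := by
  have h : (i+2).factorial = (i+2) * ((i+1) * i.factorial) := by
    rw [Nat.factorial_succ (i+1), Nat.factorial_succ i]
  have h2 : (i.factorial : ℝ) ≠ 0 := by positivity
  rw [h]; push_cast; field_simp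

lemma expNil_mul (A B D E : Module.End ℝ V) (hD : A * B = B * A + D)
    (hE : A * D = D * A + E) (hAE : A * E = E * A)
    (hA : A ^ (finrank ℝ V) = 0) :
    expNil A * B = (B + D + (2⁻¹:ℝ) • E) * expNil A := by
  set n := finrank ℝ V with hn
  set T1 : Module.End ℝ V := ∑ i ∈ Finset.range (n+1), (((i+2).factorial:ℝ))⁻¹ • (B * A ^ (i+2))
    with hT1
  set T2 : Module.End ℝ V := ∑ i ∈ Finset.range (n+1), (((i+1).factorial:ℝ))⁻¹ • (D * A ^ (i+1))
    with hT2
  set T3 : Module.End ℝ V := ∑ i ∈ Finset.range (n+1),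
      ((2:ℝ)⁻¹ * ((i.factorial:ℝ))⁻¹) • (E * A ^ i) with hT3
  have key : ∀ i : ℕ, (((i+2).factorial:ℝ))⁻¹ • (A ^ (i+2) * B)
      = (((i+2).factorial:ℝ))⁻¹ • (B * A ^ (i+2)) + (((i+1).factorial:ℝ))⁻¹ • (D * A ^ (i+1))
        + ((2:ℝ)⁻¹ * ((i.factorial:ℝ))⁻¹) • (E * A ^ i) := by
    intro i
    rw [pow_mul_sl2 A B D E hD hE hAE i, smul_add, smul_add, smul_smul, smul_smul,
      fact_inv_s1 i, fact_inv_s2 i]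
  have hL : expNil A * B = T1 + T2 + T3 + ((B * A + D) + B) := by
    rw [expNil_eq A hA (n := n+3) (by omega), Finset.sum_mul]
    simp only [smul_mul_assoc]
    rw [show n + 3 = (n+2) + 1 from rfl,
      Finset.sum_range_succ' (fun k => ((k.factorial:ℝ))⁻¹ • (A ^ k * B)) (n+2),
      show n + 2 = (n+1) + 1 from rfl,
      Finset.sum_range_succ' (fun k => (((k+1).factorial:ℝ))⁻¹ • (A ^ (k+1) * B)) (n+1)]
    simp only [show ∀ i:ℕ, i + 1 + 1 = i + 2 from fun i => rfl]
    rw [Finset.sum_congr rfl (fun i _ => key i), Finset.sum_add_distrib, Finset.sum_add_distrib]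
    rw [← hT1, ← hT2, ← hT3]
    norm_num [hD]
    abel
  have hB : B * expNil A = T1 + (B * A + B) := by
    rw [expNil_eq A hA (n := n+3) (by omega), Finset.mul_sum]
    simp only [mul_smul_comm]
    rw [show n + 3 = (n+2) + 1 from rfl,
      Finset.sum_range_succ' (fun k => ((k.factorial:ℝ))⁻¹ • (B * A ^ k)) (n+2),
      show n + 2 = (n+1) + 1 from rfl,
      Finset.sum_range_succ' (fun k => (((k+1).factorial:ℝ))⁻¹ • (B * A ^ (k+1))) (n+1)]
    simp only [show ∀ i:ℕ, i + 1 + 1 = i + 2 from fun i => rfl]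
    rw [← hT1]
    norm_num
    abel
  have hD' : D * expNil A = T2 + D := by
    rw [expNil_eq A hA (n := n+2) (by omega), Finset.mul_sum]
    simp only [mul_smul_comm]
    rw [show n + 2 = (n+1) + 1 from rfl,
      Finset.sum_range_succ' (fun k => ((k.factorial:ℝ))⁻¹ • (D * A ^ k)) (n+1)]
    rw [← hT2]
    norm_num
  have hE' : (2:ℝ)⁻¹ • (E * expNil A) = T3 := by
    rw [expNil, Finset.mul_sum, Finset.smul_sum]
    simp only [mul_smul_comm, smul_smul]
    rfl
  rw [hL, add_mul, add_mul, smul_mul_assoc, hB, hD', ← hE']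
  abel

section Grading
variable (grading : ℤ → Submodule ℝ V)
variable (N X Hop : Module.End ℝ V)

lemma grading_support_finite (hgrad : DirectSum.IsInternal grading) :
    {ℓ : ℤ | grading ℓ ≠ ⊥}.Finite :=
  WellFoundedGT.finite_ne_bot_of_iSupIndep hgrad.submodule_iSupIndep

lemma exists_bound (hgrad : DirectSum.IsInternal grading) :
    ∃ B : ℕ, ∀ ℓ : ℤ, (B : ℤ) < |ℓ| → grading ℓ = ⊥ := by
  have hfin := (grading_support_finite grading hgrad).image (fun ℓ => ℓ.natAbs)
  obtain ⟨B, hB⟩ := hfin.bddAbove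
  refine ⟨B, fun ℓ hℓ => ?_⟩
  by_contra h
  have : ℓ.natAbs ∈ (fun ℓ => ℓ.natAbs) '' {ℓ : ℤ | grading ℓ ≠ ⊥} := ⟨ℓ, h, rfl⟩
  have := hB this
  rw [Int.abs_eq_natAbs] at hℓ
  omega

lemma mem_grading_of_eigen (hgrad : DirectSum.IsInternal grading)
    (hH : ∀ ℓ : ℤ, ∀ v ∈ grading ℓ, Hop v = (ℓ : ℝ) • v)
    {μ : ℤ} {v : V} (hv : Hop v = (μ : ℝ) • v) : v ∈ grading μ := by
  have hsub : ∀ ℓ : ℤ, grading ℓ ≤ Module.End.eigenspace Hop (ℓ : ℝ) := fun ℓ x hx =>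
    Module.End.mem_eigenspace_iff.2 (hH ℓ x hx)
  have htop : (⊤ : Submodule ℝ V) = ⨆ ℓ, grading ℓ := hgrad.submodule_iSup_eq_top.symm
  have hsup : (⊤ : Submodule ℝ V) ≤ grading μ ⊔ ⨆ (ℓ : ℤ) (_ : ℓ ≠ μ), grading ℓ := by
    rw [htop]
    refine iSup_le fun ℓ => ?_
    by_cases h : ℓ = μ
    · subst h; exact le_sup_left
    · exact le_trans (le_iSup₂ (f := fun (ℓ : ℤ) (_ : ℓ ≠ μ) => grading ℓ) ℓ h) le_sup_right
  obtain ⟨a, ha, b, hb, hab⟩ := Submodule.mem_sup.1 (hsup (Submodule.mem_top : v ∈ ⊤))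
  have hbe : b ∈ Module.End.eigenspace Hop (μ : ℝ) := by
    have hve : v ∈ Module.End.eigenspace Hop (μ : ℝ) := Module.End.mem_eigenspace_iff.2 hv
    have : b = v - a := by rw [← hab]; abel
    rw [this]
    exact Submodule.sub_mem _ hve (hsub μ ha)
  have hb2 : b ∈ ⨆ (r : ℝ) (_ : r ≠ (μ : ℝ)), Module.End.eigenspace Hop r := by
    have hle : (⨆ (ℓ : ℤ) (_ : ℓ ≠ μ), grading ℓ) ≤
        ⨆ (r : ℝ) (_ : r ≠ (μ : ℝ)), Module.End.eigenspace Hop r := by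
      refine iSup₂_le fun (ℓ : ℤ) (hℓ : ℓ ≠ μ) => ?_
      have hne : ((ℓ : ℝ)) ≠ ((μ : ℝ)) := by exact_mod_cast hℓ
      exact le_trans (hsub ℓ)
        (le_iSup₂ (f := fun (r : ℝ) (_ : r ≠ (μ : ℝ)) => Module.End.eigenspace Hop r) _ hne)
    exact hle hb
  have hdisj := (Module.End.eigenspaces_iSupIndep Hop) ((μ : ℝ))
  have hb0 : b = 0 := by
    have := hdisj.le_bot ⟨hbe, hb2⟩
    simpa using this
  rw [← hab, hb0, add_zero]
  exact ha

lemma X_mem_grading (hgrad : DirectSum.IsInternal grading)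
    (hH : ∀ ℓ : ℤ, ∀ v ∈ grading ℓ, Hop v = (ℓ : ℝ) • v)
    (hXH : ⁅X, Hop⁆ = (-2 : ℝ) • X)
    {ℓ : ℤ} {v : V} (hv : v ∈ grading ℓ) : X v ∈ grading (ℓ + 2) := by
  apply mem_grading_of_eigen grading Hop hgrad hH
  have hcomm : Hop * X = X * Hop + (2:ℝ) • X := by
    rw [Ring.lie_def] at hXH
    have := sub_eq_iff_eq_add.1 hXH
    rw [this]; module
  have : Hop (X v) = (Hop * X) v := rfl
  rw [this, hcomm]
  simp only [LinearMap.add_apply, LinearMap.smul_apply, Module.End.mul_apply]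
  rw [hH ℓ v hv, map_smul]
  push_cast
  module

lemma X_pow_finrank [FiniteDimensional ℝ V] (hgrad : DirectSum.IsInternal grading)
    (hH : ∀ ℓ : ℤ, ∀ v ∈ grading ℓ, Hop v = (ℓ : ℝ) • v)
    (hXH : ⁅X, Hop⁆ = (-2 : ℝ) • X) :
    X ^ (Module.finrank ℝ V) = 0 := by
  apply pow_finrank_eq_zero
  obtain ⟨B, hB⟩ := exists_bound grading hgrad
  refine ⟨B + 1, ?_⟩
  have hiter : ∀ (m : ℕ) {ℓ : ℤ} {v : V}, v ∈ grading ℓ → (X ^ m) v ∈ grading (ℓ + 2 * m) := by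
    intro m
    induction m with
    | zero => intro ℓ v hv; simpa using hv
    | succ m ih =>
      intro ℓ v hv
      have h1 : (X ^ (m+1)) v = X ((X ^ m) v) := by
        rw [pow_succ']; rfl
      rw [h1]
      have := X_mem_grading grading X Hop hgrad hH hXH (ih hv)
      convert this using 2
      push_cast
      ring
  ext v
  simp only [LinearMap.zero_apply]
  have hv : v ∈ (⊤ : Submodule ℝ V) := Submodule.mem_top
  rw [← hgrad.submodule_iSup_eq_top] at hv
  refine Submodule.iSup_induction (motive := fun x => (X ^ (B+1)) x = 0) grading hv ?_ (by simp) ?_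
  · intro ℓ x hx
    have h1 := hiter (B+1) hx
    by_cases h : grading ℓ = ⊥
    · rw [h] at hx; simp only [Submodule.mem_bot] at hx; rw [hx]; simp
    · have hle : |ℓ| ≤ (B:ℤ) := by
        by_contra hc
        exact h (hB ℓ (by omega))
      obtain ⟨hl1, hl2⟩ := abs_le.1 hle
      have : grading (ℓ + 2 * (B+1:ℕ)) = ⊥ := by
        apply hB
        push_cast
        rw [abs_of_nonneg (by omega)]
        omega
      rw [this] at h1
      simpa using h1
  · intro x y hx hy
    rw [map_add, hx, hy, add_zero]

lemma N_pow_mem_grading (hdeg : ∀ ℓ : ℤ, (grading ℓ).map N ≤ grading (ℓ - 2))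
    {ℓ : ℤ} {v : V} (hv : v ∈ grading ℓ) (j : ℕ) : (N ^ j) v ∈ grading (ℓ - 2 * j) := by
  induction j with
  | zero => simpa using hv
  | succ j ih =>
    have h1 : (N ^ (j+1)) v = N ((N ^ j) v) := by rw [pow_succ']; rfl
    rw [h1]
    have := hdeg (ℓ - 2 * j) ⟨_, ih, rfl⟩
    convert this using 2
    push_cast
    ring

end Grading

section Sl2
variable (grading : ℤ → Submodule ℝ V) (N X Hop : Module.End ℝ V)

lemma X_mul_N_pow (hXY : ⁅X, N⁆ = Hop) (hYH : ⁅N, Hop⁆ = (2:ℝ) • N) (t : ℕ) :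
    X * N ^ (t+1) = N ^ (t+1) * X + ((t:ℝ)+1) • (N ^ t * Hop) - (((t:ℝ)+1)*(t:ℝ)) • N ^ t := by
  rw [Ring.lie_def] at hXY hYH
  have hXN : X * N = N * X + Hop := by rw [← hXY]; abel
  have hHN : Hop * N = N * Hop - (2:ℝ) • N := by
    rw [eq_sub_iff_add_eq, ← hYH]; abel
  induction t with
  | zero =>
    simp only [pow_one, pow_zero, one_mul, Nat.cast_zero, zero_add, one_smul, mul_zero,
      zero_mul, zero_smul, sub_zero, hXN]
  | succ t ih =>
    have e1 : X * N ^ (t+2) = (X * N ^ (t+1)) * N := by rw [mul_assoc, ← pow_succ]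
    rw [show t+1+1 = t+2 from rfl, e1, ih]
    simp only [sub_mul, add_mul, smul_mul_assoc, mul_assoc]
    rw [hXN, hHN]
    simp only [mul_add, mul_sub, mul_smul_comm, ← mul_assoc, ← pow_succ]
    push_cast
    match_scalars <;> ring

variable {grading N X Hop}

lemma X_p_eq_zero (hgrad : DirectSum.IsInternal grading)
    (hdeg : ∀ ℓ : ℤ, (grading ℓ).map N ≤ grading (ℓ - 2))
    (hlef : ∀ ℓ : ℕ, 1 ≤ ℓ →
      (∀ u ∈ grading (ℓ : ℤ), (N ^ ℓ) u = 0 → u = 0) ∧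
      (∀ v ∈ grading (-(ℓ : ℤ)), ∃ u ∈ grading (ℓ : ℤ), (N ^ ℓ) u = v))
    (hXY : ⁅X, N⁆ = Hop) (hXH : ⁅X, Hop⁆ = (-2 : ℝ) • X) (hYH : ⁅N, Hop⁆ = (2 : ℝ) • N)
    (hH : ∀ ℓ : ℤ, ∀ v ∈ grading ℓ, Hop v = (ℓ : ℝ) • v)
    {ℓ : ℕ} {p : V} (hp1 : p ∈ grading (ℓ : ℤ)) (hp2 : (N ^ (ℓ+1)) p = 0) :
    X p = 0 := by
  have hNp2 : (N ^ (ℓ+2)) p = 0 := by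
    rw [show ℓ+2 = 1 + (ℓ+1) from by omega, pow_add, Module.End.mul_apply, hp2, map_zero]
  have hkey := congrArg (fun (f : Module.End ℝ V) => f p) (X_mul_N_pow N X Hop hXY hYH (ℓ+1))
  simp only [Module.End.mul_apply, LinearMap.sub_apply, LinearMap.add_apply,
    LinearMap.smul_apply] at hkey
  rw [hNp2, map_zero] at hkey
  have hHp : Hop p = (ℓ:ℝ) • p := by
    have := hH (ℓ:ℤ) p hp1
    simpa using this
  rw [hHp, map_smul, hp2] at hkey
  simp only [smul_zero, add_zero, sub_zero] at hkey
  -- hkey : 0 = (N^(ℓ+2)) (X p)  (roughly)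
  have hXp : X p ∈ grading ((ℓ:ℤ) + 2) := X_mem_grading grading X Hop hgrad hH hXH hp1
  have hXp' : X p ∈ grading (((ℓ+2:ℕ)) : ℤ) := by
    have hc : (((ℓ+2:ℕ)) : ℤ) = (ℓ:ℤ) + 2 := by push_cast; ring
    rw [hc]; exact hXp
  refine (hlef (ℓ+2) (by omega)).1 (X p) hXp' ?_
  exact hkey.symm

lemma X_N_pow_p (hgrad : DirectSum.IsInternal grading)
    (hdeg : ∀ ℓ : ℤ, (grading ℓ).map N ≤ grading (ℓ - 2))
    (hlef : ∀ ℓ : ℕ, 1 ≤ ℓ →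
      (∀ u ∈ grading (ℓ : ℤ), (N ^ ℓ) u = 0 → u = 0) ∧
      (∀ v ∈ grading (-(ℓ : ℤ)), ∃ u ∈ grading (ℓ : ℤ), (N ^ ℓ) u = v))
    (hXY : ⁅X, N⁆ = Hop) (hXH : ⁅X, Hop⁆ = (-2 : ℝ) • X) (hYH : ⁅N, Hop⁆ = (2 : ℝ) • N)
    (hH : ∀ ℓ : ℤ, ∀ v ∈ grading ℓ, Hop v = (ℓ : ℝ) • v)
    {ℓ : ℕ} {p : V} (hp1 : p ∈ grading (ℓ : ℤ)) (hp2 : (N ^ (ℓ+1)) p = 0) (j : ℕ) :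
    X ((N ^ (j+1)) p) = (((j:ℝ)+1) * ((ℓ:ℝ) - (j:ℝ))) • (N ^ j) p := by
  have hkey := congrArg (fun f : Module.End ℝ V => f p) (X_mul_N_pow N X Hop hXY hYH j)
  simp only [Module.End.mul_apply, LinearMap.sub_apply, LinearMap.add_apply,
    LinearMap.smul_apply] at hkey
  have hHp : Hop p = (ℓ:ℝ) • p := by simpa using hH (ℓ:ℤ) p hp1
  rw [X_p_eq_zero hgrad hdeg hlef hXY hXH hYH hH hp1 hp2, map_zero, hHp, map_smul] at hkey
  rw [hkey]
  match_scalars <;> ring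

lemma strC_zero (ℓ k : ℕ) : strC ℓ k 0 = 1 := by
  simp only [strC, Nat.sub_zero, add_zero]
  rw [div_self (by positivity), div_self (by positivity), one_mul]

lemma strC_succ (ℓ k m : ℕ) (h1 : m < k) (h2 : k ≤ ℓ) :
    strC ℓ k m * ((((k-m-1:ℕ):ℝ)+1) * ((ℓ:ℝ) - ((k-m-1:ℕ):ℝ))) = strC ℓ k (m+1) := by
  obtain ⟨c, rfl⟩ : ∃ c, ℓ = k + c := ⟨ℓ - k, by omega⟩
  obtain ⟨a, rfl⟩ : ∃ a, k = m + a + 1 := ⟨k - m - 1, by omega⟩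
  simp only [strC, show m+a+1-m = a+1 from by omega, show m+a+1-(m+1) = a from by omega,
    show m+a+1-m-1 = a from by omega, show m+a+1+c-(m+a+1) = c from by omega,
    show m+a+1+c-(m+a+1)+m = c+m from by omega,
    show m+a+1+c-(m+a+1)+(m+1) = (c+m)+1 from by omega, show c+(m+1) = (c+m)+1 from by omega,
    Nat.add_sub_cancel]
  rw [Nat.factorial_succ a, Nat.factorial_succ (c+m)]
  have f1 : ((a.factorial : ℝ)) ≠ 0 := by positivity
  have f2 : ((c.factorial : ℝ)) ≠ 0 := by positivity
  push_cast
  field_simp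
  ring

lemma X_pow_N_pow_p (hgrad : DirectSum.IsInternal grading)
    (hdeg : ∀ ℓ : ℤ, (grading ℓ).map N ≤ grading (ℓ - 2))
    (hlef : ∀ ℓ : ℕ, 1 ≤ ℓ →
      (∀ u ∈ grading (ℓ : ℤ), (N ^ ℓ) u = 0 → u = 0) ∧
      (∀ v ∈ grading (-(ℓ : ℤ)), ∃ u ∈ grading (ℓ : ℤ), (N ^ ℓ) u = v))
    (hXY : ⁅X, N⁆ = Hop) (hXH : ⁅X, Hop⁆ = (-2 : ℝ) • X) (hYH : ⁅N, Hop⁆ = (2 : ℝ) • N)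
    (hH : ∀ ℓ : ℤ, ∀ v ∈ grading ℓ, Hop v = (ℓ : ℝ) • v)
    {ℓ : ℕ} {p : V} (hp1 : p ∈ grading (ℓ : ℤ)) (hp2 : (N ^ (ℓ+1)) p = 0)
    {k : ℕ} (hk : k ≤ ℓ) :
    ∀ m, m ≤ k → (X ^ m) ((N ^ k) p) = strC ℓ k m • (N ^ (k-m)) p := by
  intro m
  induction m with
  | zero => intro _; simp [strC_zero]
  | succ m ih =>
    intro hm
    have hmk : m < k := by omega
    have h1 : (X ^ (m+1)) ((N ^ k) p) = X ((X ^ m) ((N ^ k) p)) := by rw [pow_succ']; rfl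
    rw [h1, ih (by omega), map_smul]
    have e1 : k - m = (k - m - 1) + 1 := by omega
    rw [e1, X_N_pow_p hgrad hdeg hlef hXY hXH hYH hH hp1 hp2 (k-m-1), smul_smul,
      strC_succ ℓ k m hmk (by omega)]
    rw [show k - (m+1) = k - m - 1 from by omega]

lemma X_pow_N_pow_p_zero (hgrad : DirectSum.IsInternal grading)
    (hdeg : ∀ ℓ : ℤ, (grading ℓ).map N ≤ grading (ℓ - 2))
    (hlef : ∀ ℓ : ℕ, 1 ≤ ℓ →
      (∀ u ∈ grading (ℓ : ℤ), (N ^ ℓ) u = 0 → u = 0) ∧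
      (∀ v ∈ grading (-(ℓ : ℤ)), ∃ u ∈ grading (ℓ : ℤ), (N ^ ℓ) u = v))
    (hXY : ⁅X, N⁆ = Hop) (hXH : ⁅X, Hop⁆ = (-2 : ℝ) • X) (hYH : ⁅N, Hop⁆ = (2 : ℝ) • N)
    (hH : ∀ ℓ : ℤ, ∀ v ∈ grading ℓ, Hop v = (ℓ : ℝ) • v)
    {ℓ : ℕ} {p : V} (hp1 : p ∈ grading (ℓ : ℤ)) (hp2 : (N ^ (ℓ+1)) p = 0)
    {k m : ℕ} (hk : k ≤ ℓ) (hm : k < m) :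
    (X ^ m) ((N ^ k) p) = 0 := by
  obtain ⟨r, rfl⟩ : ∃ r, m = r + 1 + k := ⟨m - 1 - k, by omega⟩
  rw [pow_add, Module.End.mul_apply,
    X_pow_N_pow_p hgrad hdeg hlef hXY hXH hYH hH hp1 hp2 hk k le_rfl, map_smul]
  rw [Nat.sub_self, pow_zero, Module.End.one_apply, pow_succ, Module.End.mul_apply,
    X_p_eq_zero hgrad hdeg hlef hXY hXH hYH hH hp1 hp2, map_zero, smul_zero]

lemma prim_finrank
    (hlef : ∀ ℓ : ℕ, 1 ≤ ℓ →
      (∀ u ∈ grading (ℓ : ℤ), (N ^ ℓ) u = 0 → u = 0) ∧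
      (∀ v ∈ grading (-(ℓ : ℤ)), ∃ u ∈ grading (ℓ : ℤ), (N ^ ℓ) u = v))
    (hdeg : ∀ ℓ : ℤ, (grading ℓ).map N ≤ grading (ℓ - 2))
    (hH : ∀ ℓ : ℤ, ∀ v ∈ grading ℓ, Hop v = (ℓ : ℝ) • v)
    {ℓ : ℕ} {p : V} (hp1 : p ∈ grading (ℓ : ℤ)) (hp2 : (N ^ (ℓ+1)) p = 0) (hp0 : p ≠ 0) :
    ℓ + 1 ≤ Module.finrank ℝ V := by
  have hNl : (N ^ ℓ) p ≠ 0 := by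
    rcases Nat.eq_zero_or_pos ℓ with h | h
    · subst h; simpa using hp0
    · intro hz; exact hp0 ((hlef ℓ h).1 p hp1 hz)
  have hnz : ∀ j, j ≤ ℓ → (N ^ j) p ≠ 0 := by
    intro j hj hz
    apply hNl
    rw [show ℓ = (ℓ - j) + j from by omega, pow_add, Module.End.mul_apply, hz, map_zero]
  have hev : ∀ j : Fin (ℓ+1), Hop.HasEigenvector ((ℓ:ℝ) - 2*((j:ℕ):ℝ)) ((N ^ (j:ℕ)) p) := by
    intro j
    constructor
    · rw [Module.End.mem_eigenspace_iff]
      have hmem := N_pow_mem_grading grading N hdeg hp1 (j:ℕ)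
      rw [hH _ _ hmem]
      push_cast
      ring_nf
    · exact hnz _ (by omega)
  have hinj : Function.Injective (fun j : Fin (ℓ+1) => (ℓ:ℝ) - 2*((j:ℕ):ℝ)) := by
    intro a b hab
    simp only at hab
    have : ((a:ℕ):ℝ) = ((b:ℕ):ℝ) := by linarith
    exact Fin.ext (by exact_mod_cast this)
  have hli := Module.End.eigenvectors_linearIndependent' Hop
    (fun j : Fin (ℓ+1) => (ℓ:ℝ) - 2*((j:ℕ):ℝ)) hinj _ hev
  have := hli.fintype_card_le_finrank
  simpa using this

lemma weil_p (hgrad : DirectSum.IsInternal grading)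
    (hdeg : ∀ ℓ : ℤ, (grading ℓ).map N ≤ grading (ℓ - 2))
    (hlef : ∀ ℓ : ℕ, 1 ≤ ℓ →
      (∀ u ∈ grading (ℓ : ℤ), (N ^ ℓ) u = 0 → u = 0) ∧
      (∀ v ∈ grading (-(ℓ : ℤ)), ∃ u ∈ grading (ℓ : ℤ), (N ^ ℓ) u = v))
    (hXY : ⁅X, N⁆ = Hop) (hXH : ⁅X, Hop⁆ = (-2 : ℝ) • X) (hYH : ⁅N, Hop⁆ = (2 : ℝ) • N)
    (hH : ∀ ℓ : ℤ, ∀ v ∈ grading ℓ, Hop v = (ℓ : ℝ) • v)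
    {ℓ : ℕ} {p : V} (hp1 : p ∈ grading (ℓ : ℤ)) (hp2 : (N ^ (ℓ+1)) p = 0) :
    (expNil (-X) * expNil N * expNil (-X)) p = ((ℓ.factorial : ℝ)⁻¹) • (N ^ ℓ) p := by
  by_cases hp0 : p = 0
  · subst hp0; simp
  have hXp := X_p_eq_zero hgrad hdeg hlef hXY hXH hYH hH hp1 hp2
  have hK : ℓ + 1 ≤ Module.finrank ℝ V := prim_finrank hlef hdeg hH hp1 hp2 hp0
  have hXpow : ∀ m : ℕ, (X ^ (m+1)) p = 0 := by
    intro m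
    rw [pow_succ, Module.End.mul_apply, hXp, map_zero]
  have hnegpow : ∀ (m : ℕ) (v : V), ((-X) ^ m) v = ((-1:ℝ)^m) • (X ^ m) v := by
    intro m v
    rw [show (-X) = (-1:ℝ) • X from by module, smul_pow]
    simp
  have hstep1 : expNil (-X) p = p := by
    rw [expNil_apply, Finset.sum_eq_single 0]
    · simp
    · intro b _ hb
      obtain ⟨m, rfl⟩ : ∃ m, b = m+1 := ⟨b-1, by omega⟩
      rw [hnegpow, hXpow, smul_zero, smul_zero]
    · intro h; exact absurd (Finset.mem_range.2 (by omega)) h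
  have hNz : ∀ m, ℓ + 1 ≤ m → (N ^ m) p = 0 := by
    intro m hm
    rw [show m = (m - (ℓ+1)) + (ℓ+1) from by omega, pow_add, Module.End.mul_apply, hp2, map_zero]
  have hEX : ∀ kk, kk ≤ ℓ → expNil (-X) ((N ^ kk) p)
      = ∑ m ∈ Finset.range (kk+1),
          ((-1:ℝ)^m * ((m.factorial : ℝ))⁻¹ * strC ℓ kk m) • (N ^ (kk-m)) p := by
    intro kk hk
    rw [expNil_apply]
    rw [← Finset.sum_subset (Finset.range_subset_range.2 (show kk+1 ≤ Module.finrank ℝ V + 1 by omega))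
        (fun m _ hm => ?_)]
    · refine Finset.sum_congr rfl fun m hm => ?_
      rw [hnegpow,
        X_pow_N_pow_p hgrad hdeg hlef hXY hXH hYH hH hp1 hp2 hk m
          (by rw [Finset.mem_range] at hm; omega), smul_smul, smul_smul]
      ring_nf
    · rw [hnegpow, X_pow_N_pow_p_zero hgrad hdeg hlef hXY hXH hYH hH hp1 hp2 hk
        (by simp only [Finset.mem_range, not_lt] at hm; omega), smul_zero, smul_zero]
  have hw : (expNil (-X) * expNil N * expNil (-X)) p
      = ∑ kk ∈ Finset.range (ℓ+1), ((kk.factorial : ℝ))⁻¹ • expNil (-X) ((N ^ kk) p) := by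
    rw [Module.End.mul_apply, Module.End.mul_apply, hstep1, expNil_apply N p, map_sum]
    rw [← Finset.sum_subset (Finset.range_subset_range.2 (show ℓ+1 ≤ Module.finrank ℝ V + 1 by omega))
        (fun m _ hm => ?_)]
    · exact Finset.sum_congr rfl fun kk _ => by rw [map_smul]
    · rw [hNz m (by simp only [Finset.mem_range, not_lt] at hm; omega), smul_zero, map_zero]
  rw [hw, Finset.sum_congr rfl (fun kk hkk => by
      rw [hEX kk (by simp only [Finset.mem_range] at hkk; omega), Finset.smul_sum])]
  simp only [smul_smul]
  rw [Finset.sum_sigma']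
  have hswap : (∑ q ∈ (Finset.range (ℓ+1)).sigma (fun kk => Finset.range (kk+1)),
        (((q.1.factorial : ℝ))⁻¹ * ((-1:ℝ)^q.2 * ((q.2.factorial : ℝ))⁻¹ * strC ℓ q.1 q.2))
          • (N ^ (q.1 - q.2)) p)
      = ∑ q ∈ (Finset.range (ℓ+1)).sigma (fun i => Finset.range (ℓ+1-i)),
        ((((q.1+q.2).factorial : ℝ))⁻¹ * ((-1:ℝ)^q.2 * ((q.2.factorial : ℝ))⁻¹
            * strC ℓ (q.1+q.2) q.2)) • (N ^ q.1) p := by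
    refine Finset.sum_bij' (fun q _ => (⟨q.1 - q.2, q.2⟩ : Σ _ : ℕ, ℕ))
      (fun q _ => (⟨q.1 + q.2, q.2⟩ : Σ _ : ℕ, ℕ)) ?_ ?_ ?_ ?_ ?_
    · intro a ha
      simp only [Finset.mem_sigma, Finset.mem_range] at ha ⊢
      omega
    · intro a ha
      simp only [Finset.mem_sigma, Finset.mem_range] at ha ⊢
      omega
    · intro a ha
      simp only [Finset.mem_sigma, Finset.mem_range] at ha
      ext <;> simp <;> omega
    · intro a ha
      simp only [Finset.mem_sigma, Finset.mem_range] at ha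
      ext <;> simp <;> omega
    · intro a ha
      simp only [Finset.mem_sigma, Finset.mem_range] at ha
      rw [show a.1 - a.2 + a.2 = a.1 from by omega]
  rw [hswap, Finset.sum_sigma]
  have hinner : ∀ i ∈ Finset.range (ℓ+1),
      (∑ m ∈ Finset.range (ℓ+1-i),
        ((((i+m).factorial : ℝ))⁻¹ * ((-1:ℝ)^m * ((m.factorial : ℝ))⁻¹ * strC ℓ (i+m) m))
          • (N ^ i) p)
      = (if i = ℓ then ((ℓ.factorial : ℝ))⁻¹ else 0) • (N ^ i) p := by
    intro i hi
    rw [Finset.mem_range] at hi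
    have hterm : ∀ m ∈ Finset.range (ℓ+1-i),
        ((((i+m).factorial : ℝ))⁻¹ * ((-1:ℝ)^m * ((m.factorial : ℝ))⁻¹ * strC ℓ (i+m) m))
          • (N ^ i) p
        = ((((ℓ-i).choose m : ℝ)) * (-1:ℝ)^m * ((i.factorial : ℝ))⁻¹) • (N ^ i) p := by
      intro m hm
      rw [Finset.mem_range] at hm
      congr 1
      have e1 : i + m - m = i := by omega
      have e2 : ℓ - (i+m) + m = ℓ - i := by omega
      have e3 : ℓ - (i+m) = (ℓ-i) - m := by omega
      rw [strC, e1, e2, e3, Nat.cast_choose ℝ (show m ≤ ℓ-i from by omega)]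
      have f1 : ((i+m).factorial : ℝ) ≠ 0 := by positivity
      have f2 : (i.factorial : ℝ) ≠ 0 := by positivity
      have f3 : (m.factorial : ℝ) ≠ 0 := by positivity
      have f4 : (((ℓ-i)-m).factorial : ℝ) ≠ 0 := by positivity
      have f5 : ((ℓ-i).factorial : ℝ) ≠ 0 := by positivity
      field_simp
    rw [Finset.sum_congr rfl hterm, ← Finset.sum_smul]
    congr 1
    have hre : ∑ m ∈ Finset.range (ℓ+1-i), (((ℓ-i).choose m : ℝ)) * (-1:ℝ)^m * ((i.factorial:ℝ))⁻¹
        = (∑ m ∈ Finset.range ((ℓ-i)+1), (-1:ℝ)^m * ((ℓ-i).choose m : ℝ)) * ((i.factorial:ℝ))⁻¹ := by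
      rw [show ℓ+1-i = (ℓ-i)+1 from by omega, Finset.sum_mul]
      exact Finset.sum_congr rfl fun m _ => by ring
    rw [hre]
    have halt := Int.alternating_sum_range_choose (n := ℓ-i)
    have halt2 := congrArg (fun z : ℤ => (z : ℝ)) halt
    push_cast at halt2
    by_cases hil : i = ℓ
    · subst hil
      rw [if_pos rfl]
      rw [if_pos (by omega)] at halt2
      rw [halt2, one_mul]
    · rw [if_neg hil]
      rw [if_neg (by omega)] at halt2
      rw [halt2, zero_mul]
  refine Eq.trans (Finset.sum_congr rfl hinner) ?_
  rw [Finset.sum_eq_single ℓ]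
  · rw [if_pos rfl]
  · intro b _ hbne
    rw [if_neg hbne, zero_smul]
  · intro h
    exact absurd (Finset.mem_range.2 (by omega)) h

lemma weil_mul_N (hgrad : DirectSum.IsInternal grading) (hnil : IsNilpotent N)
    (hXY : ⁅X, N⁆ = Hop) (hXH : ⁅X, Hop⁆ = (-2 : ℝ) • X) (hYH : ⁅N, Hop⁆ = (2 : ℝ) • N)
    (hH : ∀ ℓ : ℤ, ∀ v ∈ grading ℓ, Hop v = (ℓ : ℝ) • v) :
    (expNil (-X) * expNil N * expNil (-X)) * N
      = (-X) * (expNil (-X) * expNil N * expNil (-X)) := by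
  have hXfin : X ^ (Module.finrank ℝ V) = 0 := X_pow_finrank grading X Hop hgrad hH hXH
  have hnegX : (-X) ^ (Module.finrank ℝ V) = 0 := by
    rw [neg_pow, hXfin, mul_zero]
  have hNfin : N ^ (Module.finrank ℝ V) = 0 := pow_finrank_eq_zero hnil
  rw [Ring.lie_def] at hXY hXH hYH
  have hA1 : expNil (-X) * N = (N - Hop - X) * expNil (-X) := by
    have h1 : (-X) * N = N * (-X) + (-Hop) := by
      simp only [neg_mul, mul_neg]
      rw [← hXY]; abel
    have h2 : (-X) * (-Hop) = (-Hop) * (-X) + ((-2:ℝ) • X) := by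
      simp only [neg_mul_neg]
      rw [← hXH]; abel
    have h3 : (-X) * ((-2:ℝ) • X) = ((-2:ℝ) • X) * (-X) := by
      simp only [smul_mul_assoc, mul_smul_comm, neg_mul, mul_neg]
      module
    have := expNil_mul (-X) N (-Hop) ((-2:ℝ) • X) h1 h2 h3 hnegX
    rw [this, show N + -Hop + (2⁻¹:ℝ) • ((-2:ℝ) • X) = N - Hop - X from by module]
  have hA2 : expNil N * X = (X - Hop - N) * expNil N := by
    have h1 : N * X = X * N + (-Hop) := by rw [← hXY]; abel
    have h2 : N * (-Hop) = (-Hop) * N + ((-2:ℝ) • N) := by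
      simp only [neg_mul, mul_neg]
      have : (2:ℝ) • N = N * Hop - Hop * N := hYH.symm
      rw [show (-2:ℝ) • N = -((2:ℝ) • N) from by module, this]
      abel
    have h3 : N * ((-2:ℝ) • N) = ((-2:ℝ) • N) * N := by
      simp only [smul_mul_assoc, mul_smul_comm]
    have := expNil_mul N X (-Hop) ((-2:ℝ) • N) h1 h2 h3 hNfin
    rw [this, show X + -Hop + (2⁻¹:ℝ) • ((-2:ℝ) • N) = X - Hop - N from by module]
  have hA3 : expNil N * Hop = (Hop + (2:ℝ) • N) * expNil N := by
    have h1 : N * Hop = Hop * N + ((2:ℝ) • N) := by rw [← hYH]; abel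
    have h2 : N * ((2:ℝ) • N) = ((2:ℝ) • N) * N + (0 : Module.End ℝ V) := by
      simp only [smul_mul_assoc, mul_smul_comm, add_zero]
    have h3 : N * (0 : Module.End ℝ V) = 0 * N := by simp
    have := expNil_mul N Hop ((2:ℝ) • N) 0 h1 h2 h3 hNfin
    rw [this, show Hop + (2:ℝ) • N + (2⁻¹:ℝ) • (0 : Module.End ℝ V) = Hop + (2:ℝ) • N from by
      module]
  have hmid : expNil N * (N - Hop - X) = (-X) * expNil N := by
    rw [mul_sub, mul_sub, expNil_mul_self, hA2, hA3, ← sub_mul, ← sub_mul,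
      show N - (Hop + (2:ℝ) • N) - (X - Hop - N) = -X from by module]
  calc (expNil (-X) * expNil N * expNil (-X)) * N
      = expNil (-X) * (expNil N * (expNil (-X) * N)) := by
        simp only [mul_assoc]
    _ = expNil (-X) * ((expNil N * (N - Hop - X)) * expNil (-X)) := by
        rw [hA1]; simp only [mul_assoc]
    _ = (expNil (-X) * (-X)) * (expNil N * expNil (-X)) := by
        rw [hmid]; simp only [mul_assoc]
    _ = ((-X) * expNil (-X)) * (expNil N * expNil (-X)) := by
        rw [expNil_mul_self]
    _ = (-X) * (expNil (-X) * expNil N * expNil (-X)) := by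
        simp only [mul_assoc]

lemma weil_string (hgrad : DirectSum.IsInternal grading) (hnil : IsNilpotent N)
    (hdeg : ∀ ℓ : ℤ, (grading ℓ).map N ≤ grading (ℓ - 2))
    (hlef : ∀ ℓ : ℕ, 1 ≤ ℓ →
      (∀ u ∈ grading (ℓ : ℤ), (N ^ ℓ) u = 0 → u = 0) ∧
      (∀ v ∈ grading (-(ℓ : ℤ)), ∃ u ∈ grading (ℓ : ℤ), (N ^ ℓ) u = v))
    (hXY : ⁅X, N⁆ = Hop) (hXH : ⁅X, Hop⁆ = (-2 : ℝ) • X) (hYH : ⁅N, Hop⁆ = (2 : ℝ) • N)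
    (hH : ∀ ℓ : ℤ, ∀ v ∈ grading ℓ, Hop v = (ℓ : ℝ) • v)
    {ℓ : ℕ} {p : V} (hp1 : p ∈ grading (ℓ : ℤ)) (hp2 : (N ^ (ℓ+1)) p = 0) :
    ∀ j, j ≤ ℓ → (expNil (-X) * expNil N * expNil (-X)) ((N ^ j) p)
      = (((-1:ℝ)^j * (j.factorial : ℝ)) / (((ℓ-j).factorial : ℝ))) • (N ^ (ℓ-j)) p := by
  intro j
  induction j with
  | zero =>
    intro _
    have := weil_p hgrad hdeg hlef hXY hXH hYH hH hp1 hp2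
    simpa [one_div] using this
  | succ j ih =>
    intro hj
    obtain ⟨a, rfl⟩ : ∃ a, ℓ = j + 1 + a := ⟨ℓ - (j+1), by omega⟩
    have hw := congrArg (fun f : Module.End ℝ V => f ((N ^ j) p))
      (weil_mul_N hgrad hnil hXY hXH hYH hH)
    simp only [Module.End.mul_apply] at hw
    have e1 : N ((N ^ j) p) = (N ^ (j+1)) p := by rw [pow_succ', Module.End.mul_apply]
    rw [e1] at hw
    have hnest : (expNil (-X)) ((expNil N) ((expNil (-X)) ((N ^ j) p)))
        = (((-1:ℝ)) ^ j * (j.factorial:ℝ) / (((j+1+a - j).factorial:ℝ))) • (N ^ (j+1+a - j)) p :=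
      ih (by omega)
    rw [hnest] at hw
    show (expNil (-X)) ((expNil N) ((expNil (-X)) ((N ^ (j+1)) p))) = _
    rw [hw, map_smul, LinearMap.neg_apply]
    rw [show j+1+a - j = a + 1 from by omega, show j+1+a - (j+1) = a from by omega]
    rw [X_N_pow_p hgrad hdeg hlef hXY hXH hYH hH hp1 hp2 a]
    rw [smul_neg, smul_smul, ← neg_smul]
    congr 1
    rw [Nat.factorial_succ a, Nat.factorial_succ j]
    have f1 : ((a.factorial : ℝ)) ≠ 0 := by positivity
    have f2 : ((a:ℝ)+1) ≠ 0 := by positivity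
    push_cast
    field_simp
    ring

variable {k : V →ₗ[ℝ] V →ₗ[ℝ] ℝ}

lemma k_move (hkinf : ∀ x y : V, k (N x) y + k x (N y) = 0) :
    ∀ (a : ℕ) (x y : V), k ((N^a) x) y = ((-1:ℝ)^a) * k x ((N^a) y) := by
  intro a
  induction a with
  | zero => intro x y; simp
  | succ a ih =>
    intro x y
    have h1 : (N^(a+1)) x = (N^a) (N x) := by rw [pow_succ, Module.End.mul_apply]
    have h2 : (N^(a+1)) y = N ((N^a) y) := by rw [pow_succ', Module.End.mul_apply]
    have h3 := hkinf x ((N^a) y)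
    rw [h1, ih (N x) y, h2]
    have h4 : k (N x) ((N^a) y) = - k x (N ((N^a) y)) := by linarith
    rw [h4]
    ring

lemma neg_one_pow_sq (j : ℕ) : ((-1:ℝ))^j * ((-1:ℝ))^j = 1 := by
  rw [← pow_add, show j + j = 2*j from by ring, pow_mul]
  norm_num

lemma pair_diag (hgrad : DirectSum.IsInternal grading) (hnil : IsNilpotent N)
    (hdeg : ∀ ℓ : ℤ, (grading ℓ).map N ≤ grading (ℓ - 2))
    (hlef : ∀ ℓ : ℕ, 1 ≤ ℓ →
      (∀ u ∈ grading (ℓ : ℤ), (N ^ ℓ) u = 0 → u = 0) ∧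
      (∀ v ∈ grading (-(ℓ : ℤ)), ∃ u ∈ grading (ℓ : ℤ), (N ^ ℓ) u = v))
    (hXY : ⁅X, N⁆ = Hop) (hXH : ⁅X, Hop⁆ = (-2 : ℝ) • X) (hYH : ⁅N, Hop⁆ = (2 : ℝ) • N)
    (hH : ∀ ℓ : ℤ, ∀ v ∈ grading ℓ, Hop v = (ℓ : ℝ) • v)
    (hkinf : ∀ x y : V, k (N x) y + k x (N y) = 0)
    {ℓ : ℕ} {p q : V} (hp1 : p ∈ grading (ℓ : ℤ)) (hp2 : (N ^ (ℓ+1)) p = 0)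
    (hq1 : q ∈ grading (ℓ : ℤ)) (hq2 : (N ^ (ℓ+1)) q = 0)
    {j : ℕ} (hj : j ≤ ℓ) :
    k ((N^j) p) ((expNil (-X) * expNil N * expNil (-X)) ((N^j) q))
      = ((j.factorial : ℝ) / (((ℓ-j).factorial : ℝ))) * k p ((N^ℓ) q) := by
  rw [weil_string hgrad hnil hdeg hlef hXY hXH hYH hH hq1 hq2 j hj, map_smul, smul_eq_mul,
    k_move hkinf j p ((N^(ℓ-j)) q)]
  have h1 : (N^j) ((N^(ℓ-j)) q) = (N^ℓ) q := by
    rw [← Module.End.mul_apply, ← pow_add, show j + (ℓ-j) = ℓ from by omega]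
  rw [h1]
  have hsq := neg_one_pow_sq j
  have f1 : (((ℓ-j).factorial : ℝ)) ≠ 0 := by positivity
  field_simp
  linear_combination (k p ((N^ℓ) q)) * hsq

lemma pair_off (hgrad : DirectSum.IsInternal grading) (hnil : IsNilpotent N)
    (hdeg : ∀ ℓ : ℤ, (grading ℓ).map N ≤ grading (ℓ - 2))
    (hlef : ∀ ℓ : ℕ, 1 ≤ ℓ →
      (∀ u ∈ grading (ℓ : ℤ), (N ^ ℓ) u = 0 → u = 0) ∧
      (∀ v ∈ grading (-(ℓ : ℤ)), ∃ u ∈ grading (ℓ : ℤ), (N ^ ℓ) u = v))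
    (hXY : ⁅X, N⁆ = Hop) (hXH : ⁅X, Hop⁆ = (-2 : ℝ) • X) (hYH : ⁅N, Hop⁆ = (2 : ℝ) • N)
    (hH : ∀ ℓ : ℤ, ∀ v ∈ grading ℓ, Hop v = (ℓ : ℝ) • v)
    (hkgraded : ∀ ℓ m : ℤ, ℓ + m ≠ 0 → ∀ x ∈ grading ℓ, ∀ y ∈ grading m, k x y = 0)
    (hkinf : ∀ x y : V, k (N x) y + k x (N y) = 0)
    {ℓ m : ℕ} {p q : V} (hp1 : p ∈ grading (ℓ : ℤ)) (hp2 : (N ^ (ℓ+1)) p = 0)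
    (hq1 : q ∈ grading (m : ℤ)) (hq2 : (N ^ (m+1)) q = 0)
    {i j : ℕ} (hi : i ≤ ℓ) (hj : j ≤ m) (hne : ¬ (ℓ = m ∧ i = j)) :
    k ((N^i) p) ((expNil (-X) * expNil N * expNil (-X)) ((N^j) q)) = 0 := by
  rw [weil_string hgrad hnil hdeg hlef hXY hXH hYH hH hq1 hq2 j hj, map_smul, smul_eq_mul]
  suffices h : k ((N^i) p) ((N^(m-j)) q) = 0 by rw [h, mul_zero]
  have hmem1 : (N^i) p ∈ grading ((ℓ:ℤ) - 2*i) := N_pow_mem_grading grading N hdeg hp1 i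
  have hmem2 : (N^(m-j)) q ∈ grading ((m:ℤ) - 2*((m-j:ℕ):ℤ)) :=
    N_pow_mem_grading grading N hdeg hq1 (m-j)
  by_cases hdeg0 : ((ℓ:ℤ) - 2*i) + ((m:ℤ) - 2*((m-j:ℕ):ℤ)) ≠ 0
  · exact hkgraded _ _ hdeg0 _ hmem1 _ hmem2
  · push_neg at hdeg0
    have hcast : ((m-j:ℕ):ℤ) = (m:ℤ) - (j:ℤ) := by
      rw [Int.ofNat_sub hj]
    rw [hcast] at hdeg0
    have hcond : (ℓ:ℤ) + 2*(j:ℤ) = (m:ℤ) + 2*(i:ℤ) := by omega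
    rcases lt_trichotomy ℓ m with hlt | heq | hgt
    · -- ℓ < m : move the m-j factors to the left; i + (m-j) ≥ ℓ+1
      have hij : i < j := by omega
      have hkm := k_move hkinf (m-j) ((N^i) p) q
      have hz : (N^(m-j)) ((N^i) p) = 0 := by
        rw [← Module.End.mul_apply, ← pow_add, show (m-j) + i = ((m-j) + i - (ℓ+1)) + (ℓ+1)
          from by omega, pow_add, Module.End.mul_apply, hp2, map_zero]
      rw [hz] at hkm
      simp only [map_zero, LinearMap.zero_apply] at hkm
      have hne0 : ((-1:ℝ))^(m-j) ≠ 0 := by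
        apply pow_ne_zero; norm_num
      rcases mul_eq_zero.1 hkm.symm with h | h
      · exact absurd h hne0
      · exact h
    · -- ℓ = m forces i = j
      exfalso
      apply hne
      constructor
      · exact heq
      · omega
    · -- ℓ > m : move the i factors to the right; i + (m-j) ≥ m+1
      have hij : j < i := by omega
      rw [k_move hkinf i p ((N^(m-j)) q)]
      have hz : (N^i) ((N^(m-j)) q) = 0 := by
        rw [← Module.End.mul_apply, ← pow_add, show i + (m-j) = (i + (m-j) - (m+1)) + (m+1)
          from by omega, pow_add, Module.End.mul_apply, hq2, map_zero]
      rw [hz, map_zero, mul_zero]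

lemma lefschetz_decomp (hgrad : DirectSum.IsInternal grading)
    (hdeg : ∀ ℓ : ℤ, (grading ℓ).map N ≤ grading (ℓ - 2))
    (hlef : ∀ ℓ : ℕ, 1 ≤ ℓ →
      (∀ u ∈ grading (ℓ : ℤ), (N ^ ℓ) u = 0 → u = 0) ∧
      (∀ v ∈ grading (-(ℓ : ℤ)), ∃ u ∈ grading (ℓ : ℤ), (N ^ ℓ) u = v)) (v : V) :
    ∃ (s : Finset (ℕ × ℕ)) (P : ℕ × ℕ → V),
      (∀ σ : ℕ × ℕ, P σ ∈ grading (σ.1 : ℤ) ∧ (N ^ (σ.1+1)) (P σ) = 0 ∧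
        (σ.2 ≤ σ.1 ∨ P σ = 0)) ∧
      v = ∑ σ ∈ s, (N ^ σ.2) (P σ) := by
  classical
  set Q : ℕ × ℕ → Submodule ℝ V := fun σ =>
    Submodule.map ((N ^ σ.2 : Module.End ℝ V) : V →ₗ[ℝ] V)
      (grading (σ.1 : ℤ) ⊓ LinearMap.ker (N ^ (σ.1+1))) with hQ
  -- N-stability of the span
  have hstab : ∀ u ∈ ⨆ σ, Q σ, N u ∈ ⨆ σ, Q σ := by
    intro u hu
    refine Submodule.iSup_induction (motive := fun u => N u ∈ ⨆ σ, Q σ) Q hu ?_ (by simp) ?_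
    · rintro σ x ⟨y, hy, rfl⟩
      have : N (((N ^ σ.2 : Module.End ℝ V) : V →ₗ[ℝ] V) y) = (N ^ (σ.2+1)) y := by
        rw [pow_succ', Module.End.mul_apply]
      rw [this]
      exact Submodule.mem_iSup_of_mem (σ.1, σ.2+1) ⟨y, hy, rfl⟩
    · intro x y hx hy
      rw [map_add]
      exact Submodule.add_mem _ hx hy
  have hstabn : ∀ (a : ℕ), ∀ u ∈ ⨆ σ, Q σ, (N ^ a) u ∈ ⨆ σ, Q σ := by
    intro a
    induction a with
    | zero => intro u hu; simpa using hu
    | succ a ih =>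
      intro u hu
      have : (N ^ (a+1)) u = N ((N ^ a) u) := by rw [pow_succ', Module.End.mul_apply]
      rw [this]
      exact hstab _ (ih u hu)
  obtain ⟨B, hB⟩ := exists_bound grading hgrad
  have hpos : ∀ d : ℕ, ∀ m : ℕ, (B:ℤ) < (m:ℤ) + d → grading (m:ℤ) ≤ ⨆ σ, Q σ := by
    intro d
    induction d with
    | zero =>
      intro m hm
      rw [hB (m:ℤ) (by rw [abs_of_nonneg (by positivity)]; omega)]
      exact bot_le
    | succ d ih =>
      intro m hm
      by_cases hc : (B:ℤ) < (m:ℤ) + d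
      · exact ih m hc
      intro v hv
      have hv1 : (N^(m+1)) v ∈ grading (-((m+2:ℕ):ℤ)) := by
        have := N_pow_mem_grading grading N hdeg hv (m+1)
        have e : (m:ℤ) - 2*((m+1:ℕ):ℤ) = -((m+2:ℕ):ℤ) := by push_cast; ring
        rwa [e] at this
      obtain ⟨u, hu1, hu2⟩ := (hlef (m+2) (by omega)).2 _ hv1
      have hu3 : u ∈ ⨆ σ, Q σ := ih (m+2) (by push_cast; omega) hu1
      have hNu : N u ∈ ⨆ σ, Q σ := hstab _ hu3
      have hNu2 : N u ∈ grading (m:ℤ) := by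
        have := hdeg ((m+2:ℕ):ℤ) ⟨u, hu1, rfl⟩
        have e : ((m+2:ℕ):ℤ) - 2 = (m:ℤ) := by push_cast; ring
        rwa [e] at this
      have hprim : v - N u ∈ Q (m, 0) := by
        refine ⟨v - N u, Submodule.mem_inf.2 ⟨Submodule.sub_mem _ hv hNu2,
          LinearMap.mem_ker.2 ?_⟩, by simp⟩
        rw [map_sub]
        have e1 : (N^(m+1)) (N u) = (N^(m+2)) u := by
          rw [← Module.End.mul_apply, ← pow_succ]
        rw [e1, hu2, sub_self]
      have hsum : v = (v - N u) + N u := by abel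
      rw [hsum]
      exact Submodule.add_mem _ (Submodule.mem_iSup_of_mem (m, 0) hprim) hNu
  have hneg : ∀ ℓ : ℤ, grading ℓ ≤ ⨆ σ, Q σ := by
    intro ℓ
    rcases le_or_gt 0 ℓ with hl | hl
    · have e : ℓ = ((ℓ.toNat : ℕ) : ℤ) := by omega
      rw [e]
      exact hpos (B+1) ℓ.toNat (by push_cast; omega)
    · intro v hv
      set m : ℕ := (-ℓ).toNat with hm
      have e : ℓ = -(m:ℤ) := by omega
      rw [e] at hv
      obtain ⟨u, hu1, hu2⟩ := (hlef m (by omega)).2 v hv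
      rw [← hu2]
      exact hstabn m u (hpos (B+1) m (by push_cast; omega) hu1)
  have htop : (⊤ : Submodule ℝ V) ≤ ⨆ σ, Q σ := by
    rw [← hgrad.submodule_iSup_eq_top]
    exact iSup_le hneg
  have hv : v ∈ ⨆ σ, Q σ := htop Submodule.mem_top
  obtain ⟨f, hf1, hf2⟩ := (Submodule.mem_iSup_iff_exists_finsupp Q v).1 hv
  have hchoice : ∀ σ : ℕ × ℕ, ∃ x : V, (x ∈ grading (σ.1:ℤ) ∧ (N^(σ.1+1)) x = 0 ∧
      (σ.2 ≤ σ.1 ∨ x = 0)) ∧ (N^σ.2) x = f σ := by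
    intro σ
    obtain ⟨x, hx, hfx⟩ := hf1 σ
    obtain ⟨hx1, hx2⟩ := Submodule.mem_inf.1 hx
    rw [LinearMap.mem_ker] at hx2
    by_cases hcase : σ.2 ≤ σ.1
    · exact ⟨x, ⟨hx1, hx2, Or.inl hcase⟩, hfx⟩
    · refine ⟨0, ⟨Submodule.zero_mem _, by rw [map_zero], Or.inr rfl⟩, ?_⟩
      rw [map_zero, ← hfx, show σ.2 = (σ.2 - (σ.1+1)) + (σ.1+1) from by omega, pow_add,
        Module.End.mul_apply, hx2, map_zero]
  choose P hP1 hP2 using hchoice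
  refine ⟨f.support, P, fun σ => hP1 σ, ?_⟩
  rw [← hf2, Finsupp.sum]
  exact Finset.sum_congr rfl fun σ _ => (hP2 σ).symm

lemma double_sum (hgrad : DirectSum.IsInternal grading) (hnil : IsNilpotent N)
    (hdeg : ∀ ℓ : ℤ, (grading ℓ).map N ≤ grading (ℓ - 2))
    (hlef : ∀ ℓ : ℕ, 1 ≤ ℓ →
      (∀ u ∈ grading (ℓ : ℤ), (N ^ ℓ) u = 0 → u = 0) ∧
      (∀ v ∈ grading (-(ℓ : ℤ)), ∃ u ∈ grading (ℓ : ℤ), (N ^ ℓ) u = v))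
    (hXY : ⁅X, N⁆ = Hop) (hXH : ⁅X, Hop⁆ = (-2 : ℝ) • X) (hYH : ⁅N, Hop⁆ = (2 : ℝ) • N)
    (hH : ∀ ℓ : ℤ, ∀ v ∈ grading ℓ, Hop v = (ℓ : ℝ) • v)
    (hkgraded : ∀ ℓ m : ℤ, ℓ + m ≠ 0 → ∀ x ∈ grading ℓ, ∀ y ∈ grading m, k x y = 0)
    (hkinf : ∀ x y : V, k (N x) y + k x (N y) = 0)
    (s t : Finset (ℕ × ℕ)) (P Q : ℕ × ℕ → V)
    (hP : ∀ σ : ℕ × ℕ, P σ ∈ grading (σ.1 : ℤ) ∧ (N ^ (σ.1+1)) (P σ) = 0 ∧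
        (σ.2 ≤ σ.1 ∨ P σ = 0))
    (hQ : ∀ σ : ℕ × ℕ, Q σ ∈ grading (σ.1 : ℤ) ∧ (N ^ (σ.1+1)) (Q σ) = 0 ∧
        (σ.2 ≤ σ.1 ∨ Q σ = 0)) :
    (∑ σ ∈ s, ∑ τ ∈ t, k ((N ^ σ.2) (P σ))
        ((expNil (-X) * expNil N * expNil (-X)) ((N ^ τ.2) (Q τ))))
      = ∑ σ ∈ s ∩ t, ((σ.2.factorial : ℝ) / (((σ.1 - σ.2).factorial : ℝ)))
          * k (P σ) ((N ^ σ.1) (Q σ)) := by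
  have hoff : ∀ σ τ : ℕ × ℕ, σ ≠ τ → k ((N ^ σ.2) (P σ))
      ((expNil (-X) * expNil N * expNil (-X)) ((N ^ τ.2) (Q τ))) = 0 := by
    intro σ τ hne
    rcases (hP σ).2.2 with hσ | hσ
    · rcases (hQ τ).2.2 with hτ | hτ
      · refine pair_off hgrad hnil hdeg hlef hXY hXH hYH hH hkgraded hkinf
          (hP σ).1 (hP σ).2.1 (hQ τ).1 (hQ τ).2.1 hσ hτ ?_
        intro ⟨h1, h2⟩
        exact hne (Prod.ext h1 h2)
      · rw [hτ]; simp
    · rw [hσ]; simp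
  have hdiag : ∀ σ : ℕ × ℕ, k ((N ^ σ.2) (P σ))
      ((expNil (-X) * expNil N * expNil (-X)) ((N ^ σ.2) (Q σ)))
      = ((σ.2.factorial : ℝ) / (((σ.1 - σ.2).factorial : ℝ))) * k (P σ) ((N ^ σ.1) (Q σ)) := by
    intro σ
    rcases (hP σ).2.2 with hσ | hσ
    · rcases (hQ σ).2.2 with hτ | hτ
      · exact pair_diag hgrad hnil hdeg hlef hXY hXH hYH hH hkinf
          (hP σ).1 (hP σ).2.1 (hQ σ).1 (hQ σ).2.1 hσ
      · rw [hτ]; simp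
    · rw [hσ]; simp
  have hinner : ∀ σ ∈ s, (∑ τ ∈ t, k ((N ^ σ.2) (P σ))
      ((expNil (-X) * expNil N * expNil (-X)) ((N ^ τ.2) (Q τ))))
      = if σ ∈ t then ((σ.2.factorial : ℝ) / (((σ.1 - σ.2).factorial : ℝ)))
          * k (P σ) ((N ^ σ.1) (Q σ)) else 0 := by
    intro σ _
    by_cases hσt : σ ∈ t
    · rw [if_pos hσt]
      rw [Finset.sum_eq_single_of_mem σ hσt (fun τ _ hτ => hoff σ τ (Ne.symm hτ))]
      exact hdiag σ
    · rw [if_neg hσt]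
      exact Finset.sum_eq_zero fun τ hτ => hoff σ τ (fun h => hσt (h ▸ hτ))
  rw [Finset.sum_congr rfl hinner, Finset.sum_ite_mem]

end Sl2

end PolarAux

/-- Let `(H, N)` be a graded Lefschetz structure (finite-dimensional
`ℤ`-graded real vector space `H = ⊕ H_ℓ`, `N` nilpotent of degree `-2` with
`N^ℓ : H_ℓ ≃ H_{-ℓ}` for `ℓ ≥ 1`), with canonical `sl(2,ℝ)`-representation given by the
triple `(X, N, Hop)`, and Weil element `w := e^{-X} e^{N} e^{-X}`. A graded bilinear
form `k` satisfying `k(Nx,y) + k(x,Ny) = 0` is a polarization — i.e. for every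
`ℓ ≥ 0` the form `k(·, N^ℓ ·)` restricted to the primitive part
`P_ℓ = H_ℓ ∩ ker N^{ℓ+1}` is symmetric positive definite — if and only if the bilinear
form `h(x,y) := k(x, w y)` is symmetric positive definite on `H`. -/
theorem polarization_iff_weil_posdef [FiniteDimensional ℝ V]
    (grading : ℤ → Submodule ℝ V) (hgrad : DirectSum.IsInternal grading)
    (N : Module.End ℝ V) (hnil : IsNilpotent N)
    (hdeg : ∀ ℓ : ℤ, (grading ℓ).map N ≤ grading (ℓ - 2))
    (hlef : ∀ ℓ : ℕ, 1 ≤ ℓ →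
      (∀ u ∈ grading (ℓ : ℤ), (N ^ ℓ) u = 0 → u = 0) ∧
      (∀ v ∈ grading (-(ℓ : ℤ)), ∃ u ∈ grading (ℓ : ℤ), (N ^ ℓ) u = v))
    (X Hop : Module.End ℝ V)
    (hXY : ⁅X, N⁆ = Hop) (hXH : ⁅X, Hop⁆ = (-2 : ℝ) • X)
    (hYH : ⁅N, Hop⁆ = (2 : ℝ) • N)
    (hH : ∀ ℓ : ℤ, ∀ v ∈ grading ℓ, Hop v = (ℓ : ℝ) • v)
    (k : V →ₗ[ℝ] V →ₗ[ℝ] ℝ)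
    (hkgraded : ∀ ℓ m : ℤ, ℓ + m ≠ 0 → ∀ x ∈ grading ℓ, ∀ y ∈ grading m, k x y = 0)
    (hkinf : ∀ x y : V, k (N x) y + k x (N y) = 0) :
    (∀ ℓ : ℕ,
      (∀ x ∈ grading (ℓ : ℤ) ⊓ LinearMap.ker (N ^ (ℓ + 1)),
        ∀ y ∈ grading (ℓ : ℤ) ⊓ LinearMap.ker (N ^ (ℓ + 1)),
          k x ((N ^ ℓ) y) = k y ((N ^ ℓ) x)) ∧
      (∀ x ∈ grading (ℓ : ℤ) ⊓ LinearMap.ker (N ^ (ℓ + 1)), x ≠ 0 →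
        0 < k x ((N ^ ℓ) x))) ↔
    ((∀ x y : V, k x ((expNil (-X) * expNil N * expNil (-X)) y) =
        k y ((expNil (-X) * expNil N * expNil (-X)) x)) ∧
      (∀ x : V, x ≠ 0 → 0 < k x ((expNil (-X) * expNil N * expNil (-X)) x))) := by
  classical
  constructor
  · intro hpol
    have hmem : ∀ (σ : ℕ × ℕ) (P : ℕ × ℕ → V),
        (∀ σ : ℕ × ℕ, P σ ∈ grading (σ.1 : ℤ) ∧ (N ^ (σ.1+1)) (P σ) = 0 ∧
          (σ.2 ≤ σ.1 ∨ P σ = 0)) →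
        P σ ∈ grading (σ.1 : ℤ) ⊓ LinearMap.ker (N ^ (σ.1 + 1)) := fun σ P hP =>
      Submodule.mem_inf.2 ⟨(hP σ).1, LinearMap.mem_ker.2 (hP σ).2.1⟩
    constructor
    · intro x y
      obtain ⟨s, P, hP, hx⟩ := PolarAux.lefschetz_decomp hgrad hdeg hlef x
      obtain ⟨t, Q, hQ, hy⟩ := PolarAux.lefschetz_decomp hgrad hdeg hlef y
      have hxy : k x ((expNil (-X) * expNil N * expNil (-X)) y)
          = ∑ σ ∈ s ∩ t, ((σ.2.factorial : ℝ) / (((σ.1 - σ.2).factorial : ℝ)))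
              * k (P σ) ((N ^ σ.1) (Q σ)) := by
        rw [hx, hy]
        simp only [map_sum, LinearMap.sum_apply]
        rw [Finset.sum_comm]
        exact PolarAux.double_sum hgrad hnil hdeg hlef hXY hXH hYH hH hkgraded hkinf
          s t P Q hP hQ
      have hyx : k y ((expNil (-X) * expNil N * expNil (-X)) x)
          = ∑ σ ∈ t ∩ s, ((σ.2.factorial : ℝ) / (((σ.1 - σ.2).factorial : ℝ)))
              * k (Q σ) ((N ^ σ.1) (P σ)) := by
        rw [hx, hy]
        simp only [map_sum, LinearMap.sum_apply]
        rw [Finset.sum_comm]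
        exact PolarAux.double_sum hgrad hnil hdeg hlef hXY hXH hYH hH hkgraded hkinf
          t s Q P hQ hP
      rw [hxy, hyx, Finset.inter_comm]
      refine Finset.sum_congr rfl fun σ _ => ?_
      congr 1
      exact (hpol σ.1).1 (P σ) (hmem σ P hP) (Q σ) (hmem σ Q hQ)
    · intro x hx0
      obtain ⟨s, P, hP, hx⟩ := PolarAux.lefschetz_decomp hgrad hdeg hlef x
      have hxx : k x ((expNil (-X) * expNil N * expNil (-X)) x)
          = ∑ σ ∈ s, ((σ.2.factorial : ℝ) / (((σ.1 - σ.2).factorial : ℝ)))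
              * k (P σ) ((N ^ σ.1) (P σ)) := by
        rw [hx]
        simp only [map_sum, LinearMap.sum_apply]
        rw [Finset.sum_comm, PolarAux.double_sum hgrad hnil hdeg hlef hXY hXH hYH hH hkgraded
          hkinf s s P P hP hP, Finset.inter_self]
      rw [hxx]
      have hterm : ∀ σ : ℕ × ℕ, P σ ≠ 0 →
          0 < ((σ.2.factorial : ℝ) / (((σ.1 - σ.2).factorial : ℝ)))
              * k (P σ) ((N ^ σ.1) (P σ)) := by
        intro σ hσ
        have h1 : (0:ℝ) < (σ.2.factorial : ℝ) / (((σ.1 - σ.2).factorial : ℝ)) := by positivity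
        exact mul_pos h1 ((hpol σ.1).2 (P σ) (hmem σ P hP) hσ)
      have hex : ∃ σ ∈ s, P σ ≠ 0 := by
        by_contra h
        push_neg at h
        apply hx0
        rw [hx]
        exact Finset.sum_eq_zero fun σ hσ => by rw [h σ hσ, map_zero]
      obtain ⟨σ₀, hσ₀s, hσ₀⟩ := hex
      refine Finset.sum_pos' (fun σ _ => ?_) ⟨σ₀, hσ₀s, hterm σ₀ hσ₀⟩
      by_cases hσ : P σ = 0
      · rw [hσ]
        simp
      · exact le_of_lt (hterm σ hσ)
  · rintro ⟨hsym, hpos⟩ ℓ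
    have hd : ∀ x y : V, x ∈ grading (ℓ : ℤ) ⊓ LinearMap.ker (N ^ (ℓ + 1)) →
        y ∈ grading (ℓ : ℤ) ⊓ LinearMap.ker (N ^ (ℓ + 1)) →
        k x ((expNil (-X) * expNil N * expNil (-X)) y)
          = ((ℓ.factorial : ℝ))⁻¹ * k x ((N ^ ℓ) y) := by
      intro x y hx hy
      obtain ⟨hx1, hx2⟩ := Submodule.mem_inf.1 hx
      obtain ⟨hy1, hy2⟩ := Submodule.mem_inf.1 hy
      have := PolarAux.pair_diag hgrad hnil hdeg hlef hXY hXH hYH hH hkinf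
        hx1 (LinearMap.mem_ker.1 hx2) hy1 (LinearMap.mem_ker.1 hy2) (j := 0) (by omega)
      simpa [one_div] using this
    have hfac : ((ℓ.factorial : ℝ)) ≠ 0 := by positivity
    constructor
    · intro x hx y hy
      have hs := hsym x y
      rw [hd x y hx hy, hd y x hy hx] at hs
      exact mul_left_cancel₀ (inv_ne_zero hfac) hs
    · intro x hx hx0
      have h := hpos x hx0
      rw [hd x x hx hx] at h
      have hfacpos : (0:ℝ) < ((ℓ.factorial : ℝ))⁻¹ := by positivity
      by_contra hK
      push_neg at hK
      nlinarith
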